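/- Define k : ℂ² × ℝ → ℂ² × ℝ by k(α, β, h) = ((α(h−1) + 480(h−2))/(h−3), ((h−3)²(hβ − 746496) + (α + 120(h−1))²)/((h−4)(h−3)²), h − 2). Then for every n ≥ 0 the n-fold iterate satisfies kⁿ(α, β, h) = ((α(h−1) + 480n(h−n−1))/(h−2n−1), n(h−n−1)(α + 120(h−1))²/((h−2n)(h−2n−1)²(h−2n−2)) + (h(h−2)β − 746496n(h−n−1))/((h−2n)(h−2n−2)), h − 2n), provided all intermediate denominators are nonzero. -/

import Mathlib

set_option maxHeartbeats 4000000

noncomputable def k : ℂ × ℂ × ℝ → ℂ × ℂ × ℝ :=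
  fun p =>
    let α := p.1
    let β := p.2.1
    let h : ℂ := (p.2.2 : ℝ)
    ((α * (h - 1) + 480 * (h - 2)) / (h - 3),
     ((h - 3) ^ 2 * (h * β - 746496) + (α + 120 * (h - 1)) ^ 2) / ((h - 4) * (h - 3) ^ 2),
     p.2.2 - 2)

theorem stmt_2 (α β : ℂ) (h : ℝ) (n : ℕ)
    (hden : ∀ j : ℕ, j ≤ n →
      (h - 2 * j ≠ 0 ∧ h - 2 * j - 1 ≠ 0 ∧ h - 2 * j - 2 ≠ 0)) :
    k^[n] (α, β, h) =
      ((α * ((h : ℂ) - 1) + 480 * n * ((h : ℂ) - n - 1)) / ((h : ℂ) - 2 * n - 1),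
       (n : ℂ) * ((h : ℂ) - n - 1) * (α + 120 * ((h : ℂ) - 1)) ^ 2 /
          (((h : ℂ) - 2 * n) * ((h : ℂ) - 2 * n - 1) ^ 2 * ((h : ℂ) - 2 * n - 2)) +
        ((h : ℂ) * ((h : ℂ) - 2) * β - 746496 * n * ((h : ℂ) - n - 1)) /
          (((h : ℂ) - 2 * n) * ((h : ℂ) - 2 * n - 2)),
       h - 2 * n) := by
  induction n with
  | zero =>
    obtain ⟨a, b, c⟩ := hden 0 le_rfl
    norm_num at a b c
    have a' : (h:ℂ) ≠ 0 := by exact_mod_cast a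
    have b' : (h:ℂ) - 1 ≠ 0 := by exact_mod_cast b
    have c' : (h:ℂ) - 2 ≠ 0 := by exact_mod_cast c
    simp only [Function.iterate_zero, id_eq, Nat.cast_zero, Prod.mk.injEq]
    refine ⟨?_, ?_, ?_⟩
    · rw [eq_div_iff (by simpa using b')]; ring
    · simp only [zero_mul, mul_zero, zero_div, zero_add, sub_zero]
      rw [eq_div_iff (mul_ne_zero a' c')]; ring
    · norm_num
  | succ n ih =>
    have key : ∀ j : ℕ, j ≤ n + 1 →
        ((h:ℂ) - 2 * j ≠ 0 ∧ (h:ℂ) - 2 * j - 1 ≠ 0 ∧ (h:ℂ) - 2 * j - 2 ≠ 0) := by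
      intro j hj
      obtain ⟨a, b, c⟩ := hden j hj
      refine ⟨fun hc => a ?_, fun hc => b ?_, fun hc => c ?_⟩ <;> exact_mod_cast hc
    rw [Function.iterate_succ_apply', ih (fun j hj => hden j (hj.trans (Nat.le_succ n)))]
    obtain ⟨e0, e1, e2⟩ := key n (Nat.le_succ n)
    obtain ⟨f0, f1, f2⟩ := key (n+1) le_rfl
    push_cast at f0 f1 f2
    have g0 : (h:ℂ) - 2 * n - 2 ≠ 0 := fun hc => f0 (by linear_combination hc)
    have g1 : (h:ℂ) - 2 * n - 3 ≠ 0 := fun hc => f1 (by linear_combination hc)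
    have g2 : (h:ℂ) - 2 * n - 4 ≠ 0 := fun hc => f2 (by linear_combination hc)
    simp only [k, Prod.mk.injEq]
    refine ⟨?_, ?_, ?_⟩
    · push_cast
      rw [div_mul_cancel₀ _ e1, div_eq_div_iff g1 f1]
      ring
    · push_cast
      field_simp [e0, e1, e2, f0, f1, f2, g0, g1, g2]
      ring
    · push_cast; ring
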